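/- Let k be an even positive integer and define, for each t ∈ [−π, π], the points G_t = (−(π/2)cos t, −(π/2)sin t, cos(kt), sin(kt)), H_t = ((π/2)cos t, (π/2)sin t, cos(kt), sin(kt)), and O_t = (0, 0, cos(kt), sin(kt)) in ℝ⁴. Then M_k = ⋃_{t ∈ [−π,π]} (segment[G_t, O_t] ∪ segment[O_t, H_t]), where M_k = {(r cos t, r sin t, cos(kt), sin(kt)) : 0 ≤ r ≤ π/2, 0 ≤ t ≤ 2π}; in particular M_k is a ruled surface. -/

import Mathlib

open Real in
lemma seg_char (t c d : ℝ) (x : ℝ × ℝ × ℝ × ℝ) :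
    x ∈ segment ℝ ((0, 0, c, d) : ℝ × ℝ × ℝ × ℝ)
      ((Real.pi / 2) * Real.cos t, (Real.pi / 2) * Real.sin t, c, d) ↔
    ∃ r : ℝ, 0 ≤ r ∧ r ≤ Real.pi / 2 ∧
      x = (r * Real.cos t, r * Real.sin t, c, d) := by
  have hpi : (0:ℝ) < Real.pi / 2 := by positivity
  rw [segment_eq_image]
  constructor
  · rintro ⟨θ, ⟨h0, h1⟩, rfl⟩
    refine ⟨θ * (Real.pi / 2), by positivity, ?_, ?_⟩
    · nlinarith
    · simp [Prod.ext_iff, smul_eq_mul]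
      exact ⟨by ring, by ring, by ring, by ring⟩
  · rintro ⟨r, hr0, hr, rfl⟩
    refine ⟨r / (Real.pi / 2), ⟨by positivity, by rw [div_le_one hpi]; exact hr⟩, ?_⟩
    simp [Prod.ext_iff, smul_eq_mul]
    refine ⟨?_, ?_, ?_, ?_⟩ <;> (field_simp <;> ring)

theorem Mk_is_ruled (k : ℤ) (hk : 0 < k) (hke : Even k)
    (G H O : ℝ → ℝ × ℝ × ℝ × ℝ)
    (hG : ∀ t, G t = (-(Real.pi / 2) * Real.cos t, -(Real.pi / 2) * Real.sin t,
      Real.cos (k * t), Real.sin (k * t)))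
    (hH : ∀ t, H t = ((Real.pi / 2) * Real.cos t, (Real.pi / 2) * Real.sin t,
      Real.cos (k * t), Real.sin (k * t)))
    (hO : ∀ t, O t = (0, 0, Real.cos (k * t), Real.sin (k * t)))
    (Mk : Set (ℝ × ℝ × ℝ × ℝ))
    (hMk : Mk = {x | ∃ r t : ℝ, 0 ≤ r ∧ r ≤ Real.pi / 2 ∧ 0 ≤ t ∧ t ≤ 2 * Real.pi ∧
      x = (r * Real.cos t, r * Real.sin t, Real.cos (k * t), Real.sin (k * t))}) :
    Mk = ⋃ t ∈ Set.Icc (-Real.pi) Real.pi,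
      (segment ℝ (G t) (O t) ∪ segment ℝ (O t) (H t)) := by
  obtain ⟨m, hm⟩ := hke
  have hpi := Real.pi_pos
  -- rewrite G-O segment as O-(rotated H) segment
  have hGseg : ∀ t, segment ℝ (G t) (O t)
      = segment ℝ ((0, 0, Real.cos (k * t), Real.sin (k * t)) : ℝ × ℝ × ℝ × ℝ)
        ((Real.pi / 2) * Real.cos (t + Real.pi), (Real.pi / 2) * Real.sin (t + Real.pi),
          Real.cos (k * t), Real.sin (k * t)) := by
    intro t
    rw [segment_symm, hG t, hO t, Real.cos_add_pi, Real.sin_add_pi]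
    ring_nf
  have hcosk : ∀ s : ℝ, ∀ n : ℤ, Real.cos ((k : ℝ) * (s + n * (2 * Real.pi)))
      = Real.cos ((k:ℝ) * s) := by
    intro s n
    have : (k : ℝ) * (s + n * (2 * Real.pi)) = (k:ℝ) * s + (k * n : ℤ) * (2 * Real.pi) := by
      push_cast; ring
    rw [this, Real.cos_add_int_mul_two_pi]
  have hsink : ∀ s : ℝ, ∀ n : ℤ, Real.sin ((k : ℝ) * (s + n * (2 * Real.pi)))
      = Real.sin ((k:ℝ) * s) := by
    intro s n
    have : (k : ℝ) * (s + n * (2 * Real.pi)) = (k:ℝ) * s + (k * n : ℤ) * (2 * Real.pi) := by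
      push_cast; ring
    rw [this, Real.sin_add_int_mul_two_pi]
  ext x
  simp only [hMk, Set.mem_setOf_eq, Set.mem_iUnion, Set.mem_union, Set.mem_Icc]
  constructor
  · rintro ⟨r, t, hr0, hr, ht0, ht, rfl⟩
    by_cases h : t ≤ Real.pi
    · refine ⟨t, ⟨by linarith, h⟩, Or.inr ?_⟩
      rw [hO t, hH t, seg_char]
      exact ⟨r, hr0, hr, rfl⟩
    · refine ⟨t - 2 * Real.pi, ⟨by linarith, by linarith⟩, Or.inr ?_⟩
      rw [hO, hH, seg_char]
      refine ⟨r, hr0, hr, ?_⟩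
      have h1 : t = (t - 2 * Real.pi) + (1 : ℤ) * (2 * Real.pi) := by push_cast; ring
      have hc : Real.cos (t - 2 * Real.pi) = Real.cos t := by
        conv_rhs => rw [h1]; rw [Real.cos_add_int_mul_two_pi]
      have hs : Real.sin (t - 2 * Real.pi) = Real.sin t := by
        conv_rhs => rw [h1]; rw [Real.sin_add_int_mul_two_pi]
      have hck : Real.cos ((k:ℝ) * (t - 2 * Real.pi)) = Real.cos ((k:ℝ) * t) := by
        conv_rhs => rw [h1]
        rw [hcosk]
      have hsk : Real.sin ((k:ℝ) * (t - 2 * Real.pi)) = Real.sin ((k:ℝ) * t) := by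
        conv_rhs => rw [h1]
        rw [hsink]
      rw [hc, hs, hck, hsk]
  · rintro ⟨t, ⟨ht1, ht2⟩, hx | hx⟩
    · -- x ∈ segment G O : angle t + π
      rw [hGseg t, seg_char] at hx
      obtain ⟨r, hr0, hr, rfl⟩ := hx
      refine ⟨r, t + Real.pi, hr0, hr, by linarith, by linarith, ?_⟩
      have h3 : (k:ℝ) * (t + Real.pi) = (k:ℝ) * t + (m:ℤ) * (2 * Real.pi) := by
        push_cast [hm]; ring
      have hck : Real.cos ((k:ℝ) * t) = Real.cos ((k:ℝ) * (t + Real.pi)) := by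
        rw [h3, Real.cos_add_int_mul_two_pi]
      have hsk : Real.sin ((k:ℝ) * t) = Real.sin ((k:ℝ) * (t + Real.pi)) := by
        rw [h3, Real.sin_add_int_mul_two_pi]
      rw [hck, hsk]
    · rw [hO, hH, seg_char] at hx
      obtain ⟨r, hr0, hr, rfl⟩ := hx
      by_cases h : 0 ≤ t
      · exact ⟨r, t, hr0, hr, h, by linarith, rfl⟩
      · refine ⟨r, t + 2 * Real.pi, hr0, hr, by linarith, by linarith, ?_⟩
        have h1 : t + 2 * Real.pi = t + (1 : ℤ) * (2 * Real.pi) := by push_cast; ring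
        rw [h1, Real.cos_add_int_mul_two_pi, Real.sin_add_int_mul_two_pi, hcosk, hsink]
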